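/- Let φ₀, φ₁ : [0,1] → [0,1] be strictly increasing maps with φ₀(0)=0, φ₁(1)=1, and whose derivatives satisfy 0 < ρ̃ ≤ φᵢ'(x) ≤ ρ < 1/2 for all x ∈ [0,1]. Then for every n ≥ 1, as ω₀…ω_{n−1} ranges over {0,1}^n, the intervals [φ_{ω₀^{n−1}}(0), φ_{ω₀^{n−1}}(1)] are pairwise disjoint, and any two distinct such intervals are at distance at least ρ̃ⁿ(1−2ρ) from each other. -/

import Mathlib

/-- Composition along a word: the first letter of the list is applied first. -/
def compWord (φ : Fin 2 → ℝ → ℝ) (ω : List (Fin 2)) (x : ℝ) : ℝ :=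
  ω.foldl (fun y i => φ i y) x

lemma compWord_nil (φ : Fin 2 → ℝ → ℝ) (x : ℝ) : compWord φ [] x = x := rfl

lemma compWord_cons (φ : Fin 2 → ℝ → ℝ) (i : Fin 2) (l : List (Fin 2)) (x : ℝ) :
    compWord φ (i :: l) x = compWord φ l (φ i x) := rfl

lemma compWord_append (φ : Fin 2 → ℝ → ℝ) (l l' : List (Fin 2)) (x : ℝ) :
    compWord φ (l ++ l') x = compWord φ l' (compWord φ l x) :=
  List.foldl_append

lemma exists_first_diff {α : Type*} : ∀ (u v : List α), u.length = v.length → u ≠ v →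
    ∃ c i j t t', i ≠ j ∧ u = c ++ i :: t ∧ v = c ++ j :: t' ∧ t.length = t'.length := by
  intro u
  induction u with
  | nil =>
    intro v hlen hne
    cases v with
    | nil => exact absurd rfl hne
    | cons y v => simp at hlen
  | cons x u ih =>
    intro v hlen hne
    cases v with
    | nil => simp at hlen
    | cons y v =>
      by_cases hxy : x = y
      · subst hxy
        have huv : u ≠ v := fun h => hne (by rw [h])
        obtain ⟨c, i, j, t, t', hij, hu, hv, ht⟩ := ih v (by simpa using hlen) huv
        exact ⟨x :: c, i, j, t, t', hij, by simp [hu], by simp [hv], ht⟩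
      · exact ⟨[], x, y, u, v, hxy, rfl, rfl, by simpa using hlen⟩

theorem stmt_2 (φ : Fin 2 → ℝ → ℝ) (ρt ρ : ℝ)
    (hρt : 0 < ρt) (hρtρ : ρt ≤ ρ) (hρ : ρ < 1/2)
    (hmaps : ∀ i, Set.MapsTo (φ i) (Set.Icc 0 1) (Set.Icc 0 1))
    (D : Fin 2 → ℝ → ℝ)
    (hder : ∀ i, ∀ x ∈ Set.Icc (0:ℝ) 1, HasDerivAt (φ i) (D i x) x)
    (hDlb : ∀ i, ∀ x ∈ Set.Icc (0:ℝ) 1, ρt ≤ D i x)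
    (hDub : ∀ i, ∀ x ∈ Set.Icc (0:ℝ) 1, D i x ≤ ρ)
    (h0 : φ 0 0 = 0) (h1 : φ 1 1 = 1)
    (n : ℕ) (hn : 1 ≤ n) (ω ω' : List (Fin 2))
    (hω : ω.length = n) (hω' : ω'.length = n) (hne : ω ≠ ω') :
    Disjoint (Set.Icc (compWord φ ω 0) (compWord φ ω 1))
      (Set.Icc (compWord φ ω' 0) (compWord φ ω' 1)) ∧
    ∀ x ∈ Set.Icc (compWord φ ω 0) (compWord φ ω 1),
      ∀ y ∈ Set.Icc (compWord φ ω' 0) (compWord φ ω' 1),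
        ρt ^ n * (1 - 2 * ρ) ≤ |x - y| := by
  have hρt1 : ρt ≤ 1 := by linarith
  have hδpos : 0 < ρt ^ n * (1 - 2 * ρ) := by
    have := pow_pos hρt n
    nlinarith
  -- single-step bounds via MVT
  have hstep : ∀ i : Fin 2, ∀ x ∈ Set.Icc (0:ℝ) 1, ∀ y ∈ Set.Icc (0:ℝ) 1, x ≤ y →
      ρt * (y - x) ≤ φ i y - φ i x ∧ φ i y - φ i x ≤ ρ * (y - x) := by
    intro i x hx y hy hxy
    have hc : ContinuousOn (φ i) (Set.Icc 0 1) := fun z hz =>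
      (hder i z hz).continuousAt.continuousWithinAt
    have hdiff : DifferentiableOn ℝ (φ i) (interior (Set.Icc (0:ℝ) 1)) := fun z hz =>
      ((hder i z (interior_subset hz)).differentiableAt).differentiableWithinAt
    have hdge : ∀ z ∈ interior (Set.Icc (0:ℝ) 1), ρt ≤ deriv (φ i) z := by
      intro z hz
      rw [(hder i z (interior_subset hz)).deriv]
      exact hDlb i z (interior_subset hz)
    have hdle : ∀ z ∈ interior (Set.Icc (0:ℝ) 1), deriv (φ i) z ≤ ρ := by
      intro z hz
      rw [(hder i z (interior_subset hz)).deriv]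
      exact hDub i z (interior_subset hz)
    exact ⟨(convex_Icc 0 1).mul_sub_le_image_sub_of_le_deriv hc hdiff hdge x hx y hy hxy,
      (convex_Icc 0 1).image_sub_le_mul_sub_of_deriv_le hc hdiff hdle x hx y hy hxy⟩
  -- compWord maps [0,1] into itself
  have hmapsW : ∀ l : List (Fin 2), ∀ x ∈ Set.Icc (0:ℝ) 1, compWord φ l x ∈ Set.Icc (0:ℝ) 1 := by
    intro l
    induction l with
    | nil => intro x hx; simpa [compWord_nil] using hx
    | cons i l ih =>
      intro x hx
      rw [compWord_cons]
      exact ih _ (hmaps i hx)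
  -- lower derivative bound for compWord
  have hlow : ∀ l : List (Fin 2), ∀ x ∈ Set.Icc (0:ℝ) 1, ∀ y ∈ Set.Icc (0:ℝ) 1, x ≤ y →
      ρt ^ l.length * (y - x) ≤ compWord φ l y - compWord φ l x := by
    intro l
    induction l with
    | nil => intro x hx y hy hxy; simp [compWord_nil]
    | cons i l ih =>
      intro x hx y hy hxy
      have h1' := (hstep i x hx y hy hxy).1
      have hfx := hmaps i hx
      have hfy := hmaps i hy
      have hfxy : φ i x ≤ φ i y := by nlinarith
      have h2' := ih (φ i x) hfx (φ i y) hfy hfxy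
      rw [compWord_cons, compWord_cons]
      have hpow : (0:ℝ) ≤ ρt ^ l.length := le_of_lt (pow_pos hρt _)
      calc ρt ^ (i :: l).length * (y - x) = ρt ^ l.length * (ρt * (y - x)) := by
            simp [List.length_cons, pow_succ]; ring
        _ ≤ ρt ^ l.length * (φ i y - φ i x) := by nlinarith
        _ ≤ compWord φ l (φ i y) - compWord φ l (φ i x) := h2'
  have h01 : (0:ℝ) ∈ Set.Icc (0:ℝ) 1 := by norm_num
  have h11 : (1:ℝ) ∈ Set.Icc (0:ℝ) 1 := by norm_num
  -- gap lemma
  have hgap : ∀ (p q s : List (Fin 2)), s.length ≤ n →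
      compWord φ s (φ 0 (compWord φ p 1)) + ρt ^ n * (1 - 2 * ρ) ≤
        compWord φ s (φ 1 (compWord φ q 0)) := by
    intro p q s hs
    have hu : compWord φ p 1 ∈ Set.Icc (0:ℝ) 1 := hmapsW p 1 h11
    have hv : compWord φ q 0 ∈ Set.Icc (0:ℝ) 1 := hmapsW q 0 h01
    have ha : φ 0 (compWord φ p 1) ∈ Set.Icc (0:ℝ) 1 := hmaps 0 hu
    have ha' : φ 1 (compWord φ q 0) ∈ Set.Icc (0:ℝ) 1 := hmaps 1 hv
    -- φ 0 u ≤ φ 0 1 ≤ ρ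
    have h01f := hstep 0 (compWord φ p 1) hu 1 h11 hu.2
    have h01f' := hstep 0 0 h01 1 h11 (by norm_num)
    have haρ : φ 0 (compWord φ p 1) ≤ ρ := by nlinarith [hu.2, hu.1]
    -- 1 - ρ ≤ φ 1 0 ≤ φ 1 v
    have h10f := hstep 1 0 h01 (compWord φ q 0) hv hv.1
    have h10f' := hstep 1 0 h01 1 h11 (by norm_num)
    have ha'ρ : 1 - ρ ≤ φ 1 (compWord φ q 0) := by nlinarith [hv.1, hv.2]
    have haa' : φ 0 (compWord φ p 1) ≤ φ 1 (compWord φ q 0) := by linarith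
    have hl := hlow s _ ha _ ha' haa'
    have hpow : ρt ^ n ≤ ρt ^ s.length := pow_le_pow_of_le_one (le_of_lt hρt) hρt1 hs
    have hpow0 : (0:ℝ) ≤ ρt ^ s.length := le_of_lt (pow_pos hρt _)
    nlinarith [pow_pos hρt n]
  -- decompose the two words
  obtain ⟨c, i, j, t, t', hij, hu, hv, ht⟩ := exists_first_diff ω.reverse ω'.reverse
    (by simp [hω, hω']) (fun h => hne (by simpa using congrArg List.reverse h))
  have hωeq : ω = t.reverse ++ [i] ++ c.reverse := by
    have := congrArg List.reverse hu
    simpa using this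
  have hω'eq : ω' = t'.reverse ++ [j] ++ c.reverse := by
    have := congrArg List.reverse hv
    simpa using this
  have hclen : c.reverse.length ≤ n := by
    have := congrArg List.length hu
    simp [hω] at this
    simp
    omega
  have hrw : ∀ (p : List (Fin 2)) (k : Fin 2) (x : ℝ),
      compWord φ (p ++ [k] ++ c.reverse) x = compWord φ c.reverse (φ k (compWord φ p x)) := by
    intro p k x
    rw [compWord_append, compWord_append, compWord_cons, compWord_nil]
  have hord : compWord φ ω 1 + ρt ^ n * (1 - 2 * ρ) ≤ compWord φ ω' 0 ∨
      compWord φ ω' 1 + ρt ^ n * (1 - 2 * ρ) ≤ compWord φ ω 0 := by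
    fin_cases i <;> fin_cases j
    · exact absurd rfl hij
    · left
      rw [hωeq, hω'eq, hrw, hrw]
      exact hgap t.reverse t'.reverse c.reverse hclen
    · right
      rw [hωeq, hω'eq, hrw, hrw]
      exact hgap t'.reverse t.reverse c.reverse hclen
    · exact absurd rfl hij
  constructor
  · rw [Set.disjoint_left]
    intro z hz hz'
    rcases hord with h | h
    · have := hz.2; have := hz'.1; linarith
    · have := hz.1; have := hz'.2; linarith
  · intro x hx y hy
    rcases hord with h | h
    · have hxy : ρt ^ n * (1 - 2 * ρ) ≤ y - x := by
        have := hx.2; have := hy.1; linarith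
      calc ρt ^ n * (1 - 2 * ρ) ≤ y - x := hxy
        _ ≤ |y - x| := le_abs_self _
        _ = |x - y| := abs_sub_comm _ _
    · have hxy : ρt ^ n * (1 - 2 * ρ) ≤ x - y := by
        have := hy.2; have := hx.1; linarith
      calc ρt ^ n * (1 - 2 * ρ) ≤ x - y := hxy
        _ ≤ |x - y| := le_abs_self _
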